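/- For any integers t ≥ 3 and k ≥ t/2, the radio k-labeling number of the infinite distance graph D(1,t) satisfies rl_k(D(1,t)) ≥ (t/2)k² - (t²/2 - t + 1/2)k + t³/8 - t²/2 + 3t/4 - 1/2. -/

import Mathlib

/-- The infinite distance graph on `ℤ` with distance set `D`: distinct integers
`i, j` are adjacent iff `|i - j| ∈ D`. -/
def distGraph (D : Set ℤ) : SimpleGraph ℤ where
  Adj i j := i ≠ j ∧ |i - j| ∈ D
  symm := by
    constructor
    intro i j h
    exact ⟨h.1.symm, by rw [abs_sub_comm]; exact h.2⟩
  loopless := by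
    constructor
    intro i h
    exact h.1 rfl

lemma adj_step (t : ℕ) (ht : 3 ≤ t) (x s : ℤ)
    (hs : s = 1 ∨ s = -1 ∨ s = (t : ℤ) ∨ s = -(t : ℤ)) :
    (distGraph {1, (t : ℤ)}).Adj x (x + s) := by
  have h1 : x ≠ x + s := by rcases hs with h|h|h|h <;> subst h <;> omega
  have h2 : |x - (x + s)| = |s| := by rw [abs_sub_comm]; ring_nf
  refine ⟨h1, ?_⟩
  rw [h2]
  rcases hs with h|h|h|h <;> subst h <;>
    simp [abs_of_nonneg, abs_of_nonpos, Set.mem_insert_iff, abs_eq] <;> omega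

lemma walk_mul (t : ℕ) (ht : 3 ≤ t) (s : ℤ)
    (hs : s = 1 ∨ s = -1 ∨ s = (t : ℤ) ∨ s = -(t : ℤ)) :
    ∀ (j : ℕ) (x : ℤ), ∃ w : (distGraph {1, (t : ℤ)}).Walk x (x + (j : ℤ) * s), w.length = j
  | 0, x => ⟨(SimpleGraph.Walk.nil).copy rfl (by push_cast; ring), by simp⟩
  | (j+1), x => by
      obtain ⟨w, hw⟩ := walk_mul t ht s hs j (x + s)
      refine ⟨(SimpleGraph.Walk.cons (adj_step t ht x s hs) w).copy rfl (by push_cast; ring), ?_⟩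
      simp [hw]

lemma dist_le_qr (t : ℕ) (ht : 3 ≤ t) (x : ℤ) (q r : ℕ) :
    (distGraph {1, (t : ℤ)}).dist x (x + (q : ℤ) * t + r) ≤ q + r := by
  obtain ⟨w1, h1⟩ := walk_mul t ht (t : ℤ) (by tauto) q x
  obtain ⟨w2, h2⟩ := walk_mul t ht 1 (by tauto) r (x + (q : ℤ) * t)
  have hle := SimpleGraph.dist_le ((w1.append w2).copy rfl
    (show x + (q : ℤ) * t + (r : ℤ) * 1 = x + (q : ℤ) * t + r by push_cast; ring))
  simpa [h1, h2] using hle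

lemma dist_le_qr' (t : ℕ) (ht : 3 ≤ t) (x : ℤ) (q d : ℕ) :
    (distGraph {1, (t : ℤ)}).dist x (x + ((q : ℤ) + 1) * t - d) ≤ q + 1 + d := by
  obtain ⟨w1, h1⟩ := walk_mul t ht (t : ℤ) (by tauto) (q + 1) x
  obtain ⟨w2, h2⟩ := walk_mul t ht (-1) (by tauto) d (x + ((q : ℤ) + 1) * t)
  have hle := SimpleGraph.dist_le
    (((w1.copy rfl (show x + ((q + 1 : ℕ) : ℤ) * t = x + ((q : ℤ) + 1) * t by push_cast; ring)).append
      w2).copy rfl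
      (show x + ((q : ℤ) + 1) * t + (d : ℤ) * (-1) = x + ((q : ℤ) + 1) * t - d by push_cast; ring))
  have h3 : q + 1 + d = (q + 1) + d := rfl
  simpa [h1, h2, h3] using hle

lemma dist_bound_le (t : ℕ) (ht : 3 ≤ t) (x y : ℤ) (hxy : x ≤ y) :
    2 * (t : ℤ) * ((distGraph {1, (t : ℤ)}).dist x y : ℤ) ≤ 2 * (y - x) + (t : ℤ) ^ 2 - 1 := by
  have ht0 : 0 < t := by omega
  set m : ℕ := (y - x).toNat with hm
  have hym : y = x + (m : ℤ) := by simp only [hm]; omega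
  set q : ℕ := m / t with hq
  set r : ℕ := m % t with hr
  have hqr : m = q * t + r := by rw [hq, hr]; exact (Nat.div_add_mod' m t).symm
  have hrt : r < t := Nat.mod_lt _ ht0
  by_cases hcase : 2 * r ≤ t + 1
  · have hb := dist_le_qr t ht x q r
    have hy : x + (q : ℤ) * t + r = y := by rw [hym]; push_cast [hqr]; ring
    rw [hy] at hb
    have hb' : ((distGraph {1, (t : ℤ)}).dist x y : ℤ) ≤ (q : ℤ) + r := by exact_mod_cast hb
    have hqm : (m : ℤ) = (q : ℤ) * t + r := by exact_mod_cast hqr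
    have hneg : y - x = (m : ℤ) := by omega
    nlinarith [hb', hqm, hneg, (by exact_mod_cast hcase : 2 * (r : ℤ) ≤ (t : ℤ) + 1),
      (by exact_mod_cast ht : (3 : ℤ) ≤ t), (by positivity : (0:ℤ) ≤ (q:ℤ))]
  · have hb := dist_le_qr' t ht x q (t - r)
    have hy : x + ((q : ℤ) + 1) * t - ((t - r : ℕ) : ℤ) = y := by
      rw [hym]; push_cast [hqr, Nat.cast_sub hrt.le]; ring
    rw [hy] at hb
    have hb' : ((distGraph {1, (t : ℤ)}).dist x y : ℤ) ≤ (q : ℤ) + 1 + ((t : ℤ) - r) := by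
      have := hb
      have hcast : ((t - r : ℕ) : ℤ) = (t : ℤ) - r := by push_cast [Nat.cast_sub hrt.le]; ring
      calc ((distGraph {1, (t : ℤ)}).dist x y : ℤ) ≤ ((q + 1 + (t - r) : ℕ) : ℤ) := by exact_mod_cast hb
        _ = (q : ℤ) + 1 + ((t : ℤ) - r) := by push_cast [Nat.cast_sub hrt.le]; ring
    have hqm : (m : ℤ) = (q : ℤ) * t + r := by exact_mod_cast hqr
    have hneg : y - x = (m : ℤ) := by omega
    have hr2 : (t : ℤ) + 2 ≤ 2 * r := by exact_mod_cast (by omega : t + 2 ≤ 2 * r)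
    nlinarith [hb', hqm, hneg, hr2, (by exact_mod_cast ht : (3 : ℤ) ≤ t)]

lemma dist_bound (t : ℕ) (ht : 3 ≤ t) (x y : ℤ) :
    2 * (t : ℤ) * ((distGraph {1, (t : ℤ)}).dist x y : ℤ) ≤ 2 * |x - y| + (t : ℤ) ^ 2 - 1 := by
  rcases le_total x y with h | h
  · rw [abs_sub_comm, abs_of_nonneg (by omega)]
    exact dist_bound_le t ht x y h
  · rw [abs_of_nonneg (by omega), SimpleGraph.dist_comm]
    exact dist_bound_le t ht y x h

lemma sumAbs (s : ℕ) :
    ∑ v ∈ Finset.range (2 * s + 1), |(v : ℝ) - s| = s * (s + 1) := by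
  induction s with
  | zero => simp
  | succ s ih =>
    have h1 : 2 * (s + 1) + 1 = (2 * s + 2) + 1 := by ring
    rw [h1, Finset.sum_range_succ', Finset.sum_range_succ]
    have h2 : ∀ v : ℕ, |((v + 1 : ℕ) : ℝ) - ((s + 1 : ℕ) : ℝ)| = |(v : ℝ) - s| := by
      intro v; congr 1; push_cast; ring
    rw [Finset.sum_congr rfl (fun v _ => h2 v), ih]
    have h3 : |((2 * s + 1 + 1 : ℕ) : ℝ) - ((s + 1 : ℕ) : ℝ)| = s + 1 := by
      rw [abs_of_nonneg] <;> push_cast <;> [ring; linarith]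
    have h4 : |((0 : ℕ) : ℝ) - ((s + 1 : ℕ) : ℝ)| = s + 1 := by
      rw [abs_of_nonpos] <;> push_cast <;> [ring; linarith]
    rw [h3, h4]; push_cast; ring


/-- `c : ℤ → ℕ` is a radio `k`-labeling of the graph `G` on `ℤ`:
`|c(u) - c(v)| ≥ k + 1 - d(u,v)` for all distinct `u, v`. -/
def IsRadioLabeling (G : SimpleGraph ℤ) (k : ℕ) (c : ℤ → ℕ) : Prop :=
  ∀ x y : ℤ, x ≠ y → (k : ℤ) + 1 - G.dist x y ≤ |(c x : ℤ) - c y|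

set_option maxHeartbeats 2000000 in
/-- For `t ≥ 3` and `k ≥ t/2`,
`rl_k(D(1,t)) ≥ (t/2)k² - (t²/2 - t + 1/2)k + t³/8 - t²/2 + 3t/4 - 1/2`. -/
theorem radio_lower_D1t_pair (t k : ℕ) (ht : 3 ≤ t) (hk : (t : ℝ) / 2 ≤ (k : ℝ)) (c : ℤ → ℕ)
    (hc : IsRadioLabeling (distGraph {1, (t : ℤ)}) k c) :
    ∃ x y : ℤ,
      ((t : ℝ) / 2) * (k : ℝ) ^ 2 - ((t : ℝ) ^ 2 / 2 - t + 1 / 2) * k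
        + (t : ℝ) ^ 3 / 8 - (t : ℝ) ^ 2 / 2 + 3 * (t : ℝ) / 4 - 1 / 2
      ≤ (c x : ℝ) - c y := by
  have ht0 : 0 < t := by omega
  have htR : (3 : ℝ) ≤ (t : ℝ) := by exact_mod_cast ht
  have hkt : t ≤ 2 * k := by
    have h1 : (t : ℝ) ≤ ((2 * k : ℕ) : ℝ) := by push_cast; linarith
    exact_mod_cast h1
  have ht2 : t ^ 2 ≤ 2 * t * k := by
    calc t ^ 2 = t * t := sq t
    _ ≤ t * (2 * k) := Nat.mul_le_mul_left t hkt
    _ = 2 * t * k := by ring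
  set M : ℕ := 2 * t * k + 2 * t + 1 - t ^ 2 with hMdef
  have hMadd : M + t ^ 2 = 2 * t * k + 2 * t + 1 := by
    rw [hMdef]; omega
  have hMeq : (M : ℝ) = 2 * t * k + 2 * t + 1 - (t : ℝ) ^ 2 := by
    have h1 := congrArg (Nat.cast : ℕ → ℝ) hMadd
    push_cast at h1; linarith
  have hM7 : 2 * t + 1 ≤ M := by omega
  set s : ℕ := M / 4 with hsdef
  have hs4a : 4 * s ≤ M := by omega
  have hs4b : M ≤ 4 * s + 3 := by omega
  have hs1 : 1 ≤ s := by omega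
  set n : ℕ := 2 * s with hndef
  -- the sorted enumeration of {0, 1, ..., n}
  set f : Fin (n+1) → ℕ := fun i => c ((i : ℕ) : ℤ) with hf
  set σ : Equiv.Perm (Fin (n+1)) := Tuple.sort f with hσ
  set X : ℕ → ℤ := fun i => if h : i < n+1 then (((σ ⟨i, h⟩) : ℕ) : ℤ) else 0 with hX
  have hXdef : ∀ i (h : i < n+1), X i = (((σ ⟨i, h⟩) : ℕ) : ℤ) := by
    intro i h; rw [hX]; simp only [dif_pos h]
  have hmono : ∀ i, i < n → (c (X i) : ℝ) ≤ c (X (i+1)) := by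
    intro i hi
    have h1 : i < n + 1 := by omega
    have h2 : i + 1 < n + 1 := by omega
    rw [hXdef i h1, hXdef (i+1) h2]
    have hmo := Tuple.monotone_sort f (a := ⟨i, h1⟩) (b := ⟨i+1, h2⟩)
      (by rw [Fin.mk_le_mk]; omega)
    simp only [Function.comp_apply, hf] at hmo
    exact_mod_cast hmo
  have hinj : ∀ i j (hi : i < n+1) (hj : j < n+1), i ≠ j → X i ≠ X j := by
    intro i j hi hj hne
    rw [hXdef i hi, hXdef j hj]
    intro hEq
    have h1 : (σ ⟨i, hi⟩ : ℕ) = (σ ⟨j, hj⟩ : ℕ) := by exact_mod_cast hEq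
    have h3 := σ.injective (Fin.ext h1)
    rw [Fin.mk.injEq] at h3
    exact hne h3
  have hreindex : ∀ g : ℤ → ℝ, ∑ i ∈ Finset.range (n+1), g (X i)
      = ∑ v ∈ Finset.range (n+1), g ((v : ℕ) : ℤ) := by
    intro g
    rw [← Fin.sum_univ_eq_sum_range (fun i => g (X i)) (n+1),
        ← Fin.sum_univ_eq_sum_range (fun v => g ((v : ℕ) : ℤ)) (n+1),
        ← Equiv.sum_comp σ (fun j : Fin (n+1) => g ((j : ℕ) : ℤ))]
    apply Finset.sum_congr rfl
    intro i _
    rw [hXdef i.val i.isLt]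
  -- abbreviation for the sum of distances
  set SD : ℝ := ∑ i ∈ Finset.range n,
      ((distGraph {1, (t : ℤ)}).dist (X i) (X (i+1)) : ℝ) with hSD
  -- Step 1 : span of chosen vertices is at least n(k+1) - SD
  have hstep : ∀ i ∈ Finset.range n,
      (k : ℝ) + 1 - ((distGraph {1, (t : ℤ)}).dist (X i) (X (i+1)) : ℝ)
        ≤ (c (X (i+1)) : ℝ) - c (X i) := by
    intro i hi
    rw [Finset.mem_range] at hi
    have h1 : i < n + 1 := by omega
    have h2 : i + 1 < n + 1 := by omega
    have hne := hinj i (i+1) h1 h2 (by omega)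
    have hrl := hc (X i) (X (i+1)) hne
    have hmo := hmono i hi
    have hmoZ : (c (X i) : ℤ) ≤ (c (X (i+1)) : ℤ) := by exact_mod_cast hmo
    have habs : |(c (X i) : ℤ) - c (X (i+1))| = (c (X (i+1)) : ℤ) - c (X i) := by
      rw [abs_sub_comm]; exact abs_of_nonneg (by omega)
    rw [habs] at hrl
    have hrlR : (k : ℝ) + 1 - ((distGraph {1, (t : ℤ)}).dist (X i) (X (i+1)) : ℝ)
        ≤ (c (X (i+1)) : ℝ) - c (X i) := by exact_mod_cast hrl
    linarith
  have hsum1 : (n : ℝ) * ((k : ℝ) + 1) - SD ≤ (c (X n) : ℝ) - c (X 0) := by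
    have h1 := Finset.sum_le_sum hstep
    rw [Finset.sum_range_sub (fun i => (c (X i) : ℝ)) n] at h1
    rw [Finset.sum_sub_distrib, Finset.sum_const, Finset.card_range] at h1
    rw [hSD]
    simp only [nsmul_eq_mul] at h1
    linarith [h1]
  -- Step 2 : bound SD
  have hA01 : (1 : ℝ) ≤ |((X 0 : ℤ) : ℝ) - s| + |((X n : ℤ) : ℝ) - s| := by
    have hne := hinj 0 n (by omega) (by omega) (by omega)
    have h1 : (1 : ℤ) ≤ |X 0 - X n| := Int.one_le_abs (sub_ne_zero.mpr hne)
    have h2 : (1 : ℝ) ≤ |((X 0 : ℤ) : ℝ) - ((X n : ℤ) : ℝ)| := by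
      exact_mod_cast h1
    calc (1 : ℝ) ≤ |((X 0 : ℤ) : ℝ) - ((X n : ℤ) : ℝ)| := h2
      _ ≤ |((X 0 : ℤ) : ℝ) - s| + |(s : ℝ) - ((X n : ℤ) : ℝ)| := abs_sub_le _ _ _
      _ = |((X 0 : ℤ) : ℝ) - s| + |((X n : ℤ) : ℝ) - s| := by rw [abs_sub_comm (s : ℝ)]
  have hApt : ∑ i ∈ Finset.range (n+1), |((X i : ℤ) : ℝ) - s| = (s : ℝ) * (s + 1) := by
    rw [hreindex (fun z => |((z : ℤ) : ℝ) - s|)]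
    have h1 : ∀ v : ℕ, |(((v : ℕ) : ℤ) : ℝ) - (s : ℝ)| = |(v : ℝ) - s| := by
      intro v; push_cast; ring_nf
    rw [Finset.sum_congr rfl (fun v _ => h1 v)]
    have h2 : n + 1 = 2 * s + 1 := by omega
    rw [h2, sumAbs s]
  have hsumDelta : ∑ i ∈ Finset.range n, |((X (i+1) : ℤ) : ℝ) - ((X i : ℤ) : ℝ)|
      ≤ 2 * ((s : ℝ) * (s + 1)) - 1 := by
    have h1 : ∀ i ∈ Finset.range n, |((X (i+1) : ℤ) : ℝ) - ((X i : ℤ) : ℝ)|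
        ≤ |((X (i+1) : ℤ) : ℝ) - s| + |((X i : ℤ) : ℝ) - s| := by
      intro i _
      calc |((X (i+1) : ℤ) : ℝ) - ((X i : ℤ) : ℝ)|
          ≤ |((X (i+1) : ℤ) : ℝ) - s| + |(s : ℝ) - ((X i : ℤ) : ℝ)| := abs_sub_le _ _ _
        _ = |((X (i+1) : ℤ) : ℝ) - s| + |((X i : ℤ) : ℝ) - s| := by rw [abs_sub_comm (s : ℝ)]
    have h2 := Finset.sum_le_sum h1
    rw [Finset.sum_add_distrib] at h2
    have h3 : ∑ i ∈ Finset.range n, |((X (i+1) : ℤ) : ℝ) - s|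
        = ∑ i ∈ Finset.range (n+1), |((X i : ℤ) : ℝ) - s| - |((X 0 : ℤ) : ℝ) - s| := by
      rw [Finset.sum_range_succ' (fun i => |((X i : ℤ) : ℝ) - s|) n]; ring
    have h4 : ∑ i ∈ Finset.range n, |((X i : ℤ) : ℝ) - s|
        = ∑ i ∈ Finset.range (n+1), |((X i : ℤ) : ℝ) - s| - |((X n : ℤ) : ℝ) - s| := by
      rw [Finset.sum_range_succ (fun i => |((X i : ℤ) : ℝ) - s|) n]; ring
    rw [h3, h4, hApt] at h2
    linarith
  have hDb : ∀ i ∈ Finset.range n,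
      ((distGraph {1, (t : ℤ)}).dist (X i) (X (i+1)) : ℝ)
        ≤ (2 * |((X (i+1) : ℤ) : ℝ) - ((X i : ℤ) : ℝ)| + (t : ℝ) ^ 2 - 1) / (2 * t) := by
    intro i _
    have h1 := dist_bound t ht (X i) (X (i+1))
    have h2 : 2 * (t : ℝ) * ((distGraph {1, (t : ℤ)}).dist (X i) (X (i+1)) : ℝ)
        ≤ 2 * |((X i : ℤ) : ℝ) - ((X (i+1) : ℤ) : ℝ)| + (t : ℝ) ^ 2 - 1 := by
      exact_mod_cast h1
    rw [abs_sub_comm] at h2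
    rw [le_div_iff₀ (by positivity : (0 : ℝ) < 2 * t)]
    linarith
  have hsum2 : SD ≤ (2 * (2 * ((s : ℝ) * (s + 1)) - 1) + (n : ℝ) * ((t : ℝ) ^ 2 - 1)) / (2 * t) := by
    rw [hSD]
    calc ∑ i ∈ Finset.range n, ((distGraph {1, (t : ℤ)}).dist (X i) (X (i+1)) : ℝ)
        ≤ ∑ i ∈ Finset.range n,
            (2 * |((X (i+1) : ℤ) : ℝ) - ((X i : ℤ) : ℝ)| + (t : ℝ) ^ 2 - 1) / (2 * t) :=
          Finset.sum_le_sum hDb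
      _ = (∑ i ∈ Finset.range n,
            (2 * |((X (i+1) : ℤ) : ℝ) - ((X i : ℤ) : ℝ)| + (t : ℝ) ^ 2 - 1)) / (2 * t) := by
          rw [Finset.sum_div]
      _ ≤ (2 * (2 * ((s : ℝ) * (s + 1)) - 1) + (n : ℝ) * ((t : ℝ) ^ 2 - 1)) / (2 * t) := by
          gcongr
          have hterm : ∀ i : ℕ, 2 * |((X (i+1) : ℤ) : ℝ) - ((X i : ℤ) : ℝ)| + (t : ℝ) ^ 2 - 1
              = 2 * |((X (i+1) : ℤ) : ℝ) - ((X i : ℤ) : ℝ)| + ((t : ℝ) ^ 2 - 1) := by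
            intro i; ring
          rw [Finset.sum_congr rfl (fun i _ => hterm i), Finset.sum_add_distrib,
            ← Finset.mul_sum, Finset.sum_const, Finset.card_range, nsmul_eq_mul]
          linarith [hsumDelta]
  -- Step 3 : numeric conclusion
  have hnR : (n : ℝ) = 2 * (s : ℝ) := by rw [hndef]; push_cast; ring
  have hsRa : 4 * (s : ℝ) ≤ (M : ℝ) := by exact_mod_cast hs4a
  have hsRb : (M : ℝ) ≤ 4 * (s : ℝ) + 3 := by exact_mod_cast hs4b
  have hs1R : (1 : ℝ) ≤ (s : ℝ) := by exact_mod_cast hs1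
  refine ⟨X n, X 0, ?_⟩
  have ht0R : (0 : ℝ) < (t : ℝ) := by linarith
  have hkey : ((t : ℝ) / 2) * (k : ℝ) ^ 2 - ((t : ℝ) ^ 2 / 2 - t + 1 / 2) * k
        + (t : ℝ) ^ 3 / 8 - (t : ℝ) ^ 2 / 2 + 3 * (t : ℝ) / 4 - 1 / 2
      ≤ (n : ℝ) * ((k : ℝ) + 1)
        - (2 * (2 * ((s : ℝ) * (s + 1)) - 1) + (n : ℝ) * ((t : ℝ) ^ 2 - 1)) / (2 * t) := by
    rw [← sub_nonneg]
    set e : ℝ := 4 * (s : ℝ) + 2 - (2 * (t : ℝ) * k + 2 * t + 1 - (t : ℝ) ^ 2) with he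
    have he1 : e ≤ 2 := by rw [he]; rw [hMeq] at hsRa; linarith
    have he2 : -1 ≤ e := by rw [he]; rw [hMeq] at hsRb; linarith
    have hident : (n : ℝ) * ((k : ℝ) + 1)
        - (2 * (2 * ((s : ℝ) * (s + 1)) - 1) + (n : ℝ) * ((t : ℝ) ^ 2 - 1)) / (2 * t)
        - (((t : ℝ) / 2) * (k : ℝ) ^ 2 - ((t : ℝ) ^ 2 / 2 - t + 1 / 2) * k
            + (t : ℝ) ^ 3 / 8 - (t : ℝ) ^ 2 / 2 + 3 * (t : ℝ) / 4 - 1 / 2)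
        = (9 - e ^ 2) / (8 * t) := by
      rw [he, hnR]; field_simp; ring
    rw [hident]
    exact div_nonneg (by nlinarith) (by positivity)
  linarith [hsum1, hsum2, hkey]
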